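/- arXiv:2004.03005 — 5 statements merged into one kernel-verified Lean document; each statement's English description precedes it below -/
import Mathlib

section
/- Let J be an m×n real matrix, γ > 0, F ∈ ℝ^m, g = Jᵀ F, and s = -(Jᵀ J + γ I)⁻¹ g. Then |sᵀ (γ s + g)| ≤ ‖J‖² ‖g‖² / γ². -/
open scoped RealInnerProductSpace

/-- For the exact LM step, `|sᵀ(γs + g)| ≤ ‖J‖²‖g‖²/γ²`. -/
theorem lm_step_inner_bound {m n : ℕ} (γ : ℝ) (hγ : 0 < γ)
    (J : EuclideanSpace ℝ (Fin n) →L[ℝ] EuclideanSpace ℝ (Fin m))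
    (F : EuclideanSpace ℝ (Fin m)) (g s : EuclideanSpace ℝ (Fin n))
    (hg : g = ContinuousLinearMap.adjoint J F)
    (hs : ContinuousLinearMap.adjoint J (J s) + γ • s = -g) :
    |⟪s, γ • s + g⟫| ≤ ‖J‖ ^ 2 * ‖g‖ ^ 2 / γ ^ 2 := by
  have h1 : γ • s + g = -(ContinuousLinearMap.adjoint J (J s)) := by
    have : g = -(ContinuousLinearMap.adjoint J (J s) + γ • s) := by rw [hs, neg_neg]
    rw [this]; abel
  have h2 : ⟪s, γ • s + g⟫ = -‖J s‖ ^ 2 := by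
    rw [h1, inner_neg_right, ContinuousLinearMap.adjoint_inner_right,
      real_inner_self_eq_norm_sq]
  have h3 : |⟪s, γ • s + g⟫| = ‖J s‖ ^ 2 := by
    rw [h2, abs_neg, abs_of_nonneg (by positivity)]
  -- show γ ‖s‖² ≤ ‖s‖ ‖g‖
  have hcs : |⟪s, g⟫| ≤ ‖s‖ * ‖g‖ := abs_real_inner_le_norm s g
  have h4 : γ * ‖s‖ ^ 2 + ⟪s, g⟫ ≤ 0 := by
    have : γ * ‖s‖ ^ 2 + ⟪s, g⟫ = ⟪s, γ • s + g⟫ := by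
      rw [inner_add_right, real_inner_smul_right, real_inner_self_eq_norm_sq]
    rw [this, h2]
    simp only [neg_nonpos]; positivity
  have h5 : γ * ‖s‖ ^ 2 ≤ ‖s‖ * ‖g‖ := by
    have := neg_abs_le ⟪s, g⟫
    nlinarith
  have hsg : ‖s‖ ≤ ‖g‖ / γ := by
    rcases eq_or_lt_of_le (norm_nonneg s) with h | h
    · rw [← h]; positivity
    · rw [le_div_iff₀ hγ]
      nlinarith
  have h6 : ‖J s‖ ≤ ‖J‖ * (‖g‖ / γ) :=
    le_trans (J.le_opNorm s) (by nlinarith [norm_nonneg J])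
  rw [h3]
  calc ‖J s‖ ^ 2 ≤ (‖J‖ * (‖g‖ / γ)) ^ 2 := by
        apply pow_le_pow_left₀ (norm_nonneg _) h6
    _ = ‖J‖ ^ 2 * ‖g‖ ^ 2 / γ ^ 2 := by ring
end

section
/- Let J be an m×n real matrix, γ > 0, F ∈ ℝ^m with g = Jᵀ F ≠ 0. Define the model m(s) = ½‖F + J s‖² + ½ γ ‖s‖² and the Cauchy step s_c = -(‖g‖² / (gᵀ (Jᵀ J + γ I) g)) g. Then m(0) - m(s_c) ≥ (1/2) ‖g‖² / (‖J‖² + γ). -/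
open scoped RealInnerProductSpace
set_option maxHeartbeats 1000000

/-- The Cauchy step achieves the fraction-of-Cauchy-decrease bound
`m(0) - m(s_c) ≥ ½‖g‖²/(‖J‖² + γ)`. -/
theorem lm_cauchy_decrease {m n : ℕ} (γ : ℝ) (hγ : 0 < γ)
    (J : EuclideanSpace ℝ (Fin n) →L[ℝ] EuclideanSpace ℝ (Fin m))
    (F : EuclideanSpace ℝ (Fin m)) (g : EuclideanSpace ℝ (Fin n))
    (hg : g = ContinuousLinearMap.adjoint J F) (hg0 : g ≠ 0)
    (mdl : EuclideanSpace ℝ (Fin n) → ℝ)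
    (hmdl : ∀ s, mdl s = 1 / 2 * ‖F + J s‖ ^ 2 + 1 / 2 * γ * ‖s‖ ^ 2)
    (sc : EuclideanSpace ℝ (Fin n))
    (hsc : sc = -((‖g‖ ^ 2 / ⟪g, ContinuousLinearMap.adjoint J (J g) + γ • g⟫) • g)) :
    mdl 0 - mdl sc ≥ 1 / 2 * ‖g‖ ^ 2 / (‖J‖ ^ 2 + γ) := by
  have hgpos : (0:ℝ) < ‖g‖ ^ 2 := by
    have := norm_pos_iff.mpr hg0
    positivity
  set q : ℝ := ‖J g‖ ^ 2 + γ * ‖g‖ ^ 2 with hqdef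
  have hqpos : 0 < q := by positivity
  have hinner : ⟪g, ContinuousLinearMap.adjoint J (J g) + γ • g⟫ = q := by
    rw [inner_add_right, real_inner_smul_right,
      ContinuousLinearMap.adjoint_inner_right,
      real_inner_self_eq_norm_sq, real_inner_self_eq_norm_sq]
  set t : ℝ := ‖g‖ ^ 2 / q with htdef
  have hsc' : sc = (-t) • g := by rw [hsc, hinner, neg_smul]
  have hFJg : ⟪F, J g⟫ = ‖g‖ ^ 2 := by
    rw [← ContinuousLinearMap.adjoint_inner_left, ← hg, real_inner_self_eq_norm_sq]
  have hnorm1 : ‖F + J sc‖ ^ 2 = ‖F‖ ^ 2 - 2 * t * ‖g‖ ^ 2 + t ^ 2 * ‖J g‖ ^ 2 := by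
    rw [hsc', map_smul, norm_add_sq_real, real_inner_smul_right, hFJg, norm_smul]
    simp [mul_pow]
    ring
  have hnorm2 : ‖sc‖ ^ 2 = t ^ 2 * ‖g‖ ^ 2 := by
    rw [hsc', norm_smul, mul_pow]
    simp
  have hdec : mdl 0 - mdl sc = 1 / 2 * ‖g‖ ^ 4 / q := by
    rw [hmdl, hmdl, hnorm1, hnorm2]
    simp only [map_zero, add_zero, norm_zero]
    rw [htdef]
    field_simp
    ring
  rw [hdec, ge_iff_le]
  have hJγ : 0 < ‖J‖ ^ 2 + γ := by positivity
  rw [div_le_div_iff₀ hJγ hqpos]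
  have hb : ‖J g‖ ≤ ‖J‖ * ‖g‖ := J.le_opNorm g
  have hb2 : ‖J g‖ ^ 2 ≤ ‖J‖ ^ 2 * ‖g‖ ^ 2 := by
    have := mul_self_le_mul_self (norm_nonneg (J g)) hb
    nlinarith [norm_nonneg (J g), norm_nonneg g]
  nlinarith [sq_nonneg (‖g‖^2), hgpos]
end

section
/- Define F : ℝ³ → ℝ³ by F(x) = (exp(x₁ - x₂) - 1, x₃ - 1, x₃ + 1), and let X* = {x ∈ ℝ³ : x₁ = x₂ and x₃ = 0}. Then for all x with |x₁ - x₂| ≤ 1/2, ‖F(x) - F(x̄)‖ ≥ dist(x, X*), where x̄ is any point of X* and dist(x, X*) = √((x₁ - x₂)²/2 + x₃²). -/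
lemma exp_sq_lower (t : ℝ) (ht : |t| ≤ 1 / 2) :
    t ^ 2 / 2 ≤ (Real.exp t - 1) ^ 2 := by
  obtain ⟨ht1, ht2⟩ := abs_le.mp ht
  rcases le_or_gt 0 t with h | h
  · have h1 := Real.add_one_le_exp t
    nlinarith
  · -- t < 0
    have hE : 0 < Real.exp t := Real.exp_pos t
    have hEle : Real.exp t ≤ 1 := Real.exp_le_one_iff.mpr h.le
    have h2 : (1 - t / 2) ^ 2 ≤ Real.exp (-t) := by
      have h3 := Real.add_one_le_exp (-t / 2)
      have h4 : Real.exp (-t) = Real.exp (-t / 2) * Real.exp (-t / 2) := by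
        rw [← Real.exp_add]; ring_nf
      nlinarith [Real.exp_pos (-t / 2)]
    have hinv : Real.exp t * Real.exp (-t) = 1 := by
      rw [← Real.exp_add]; simp
    set u : ℝ := 1 - Real.exp t with hu
    have hu0 : 0 ≤ u := by simp [hu]; linarith
    have hA : -t + t ^ 2 / 4 ≤ u * (1 - t / 2) ^ 2 := by nlinarith
    have hAnn : 0 ≤ -t + t ^ 2 / 4 := by nlinarith
    have hA2 : (-t + t ^ 2 / 4) ^ 2 ≤ (u * (1 - t / 2) ^ 2) ^ 2 := by
      apply sq_le_sq' _ hA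
      nlinarith
    have hpoly : t ^ 2 * ((1 - t / 2) ^ 2) ^ 2 ≤ 2 * (-t + t ^ 2 / 4) ^ 2 := by
      nlinarith [sq_nonneg t, mul_nonneg (sq_nonneg t) (by linarith : (0:ℝ) ≤ -t),
        mul_nonneg (mul_nonneg (sq_nonneg t) (by linarith : (0:ℝ) ≤ -t)) (by linarith : (0:ℝ) ≤ -t),
        mul_nonneg (sq_nonneg t) (sq_nonneg t)]
    have hchain : t ^ 2 * ((1 - t / 2) ^ 2) ^ 2 ≤ 2 * u ^ 2 * ((1 - t / 2) ^ 2) ^ 2 := by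
      nlinarith
    have hpos : (0:ℝ) < ((1 - t / 2) ^ 2) ^ 2 := by
      have : (0:ℝ) < 1 - t / 2 := by linarith
      positivity
    have ht2u : t ^ 2 ≤ 2 * u ^ 2 := le_of_mul_le_mul_right (by linarith [hchain]) hpos
    have : (Real.exp t - 1) ^ 2 = u ^ 2 := by rw [hu]; ring
    linarith

/-- Example 2 of the paper: for `F(x) = (e^{x₁-x₂} - 1, x₃ - 1, x₃ + 1)` and
`X* = {x : x₁ = x₂, x₃ = 0}`, when `|x₁ - x₂| ≤ 1/2` one has
`‖F(x) - F(x̄)‖ ≥ dist(x, X*) = √((x₁-x₂)²/2 + x₃²)` for every `x̄ ∈ X*`. -/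
theorem lm_example2_error_bound
    (F : EuclideanSpace ℝ (Fin 3) → EuclideanSpace ℝ (Fin 3))
    (hF : ∀ x : EuclideanSpace ℝ (Fin 3),
      F x = ![Real.exp (x 0 - x 1) - 1, x 2 - 1, x 2 + 1])
    (Xstar : Set (EuclideanSpace ℝ (Fin 3)))
    (hX : Xstar = {x : EuclideanSpace ℝ (Fin 3) | x 0 = x 1 ∧ x 2 = 0}) :
    ∀ x : EuclideanSpace ℝ (Fin 3), |x 0 - x 1| ≤ 1 / 2 →
      (Metric.infDist x Xstar = Real.sqrt ((x 0 - x 1) ^ 2 / 2 + (x 2) ^ 2)) ∧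
      ∀ xbar ∈ Xstar,
        ‖F x - F xbar‖ ≥ Real.sqrt ((x 0 - x 1) ^ 2 / 2 + (x 2) ^ 2) := by
  intro x hx
  have hnn : 0 ≤ (x 0 - x 1) ^ 2 / 2 + (x 2) ^ 2 := by positivity
  have hlow : ∀ y ∈ Xstar,
      Real.sqrt ((x 0 - x 1) ^ 2 / 2 + (x 2) ^ 2) ≤ dist x y := by
    intro y hy
    rw [hX] at hy
    obtain ⟨hy1, hy2⟩ := hy
    rw [EuclideanSpace.dist_eq, Fin.sum_univ_three]
    apply Real.sqrt_le_sqrt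
    simp only [Real.dist_eq, sq_abs, hy2, ← hy1]
    nlinarith [sq_nonneg (x 0 + x 1 - 2 * y 0)]
  constructor
  · -- infDist formula
    set p : EuclideanSpace ℝ (Fin 3) := WithLp.toLp 2 ![(x 0 + x 1) / 2, (x 0 + x 1) / 2, 0] with hp
    have hpmem : p ∈ Xstar := by
      rw [hX]; constructor <;> simp [hp]
    have hdist : dist x p = Real.sqrt ((x 0 - x 1) ^ 2 / 2 + (x 2) ^ 2) := by
      rw [EuclideanSpace.dist_eq, Fin.sum_univ_three]
      congr 1
      simp [hp, Real.dist_eq, sq_abs]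
      ring
    apply le_antisymm
    · rw [← hdist]; exact Metric.infDist_le_dist_of_mem hpmem
    · by_contra hlt
      push_neg at hlt
      obtain ⟨y, hy, hd⟩ := (Metric.infDist_lt_iff ⟨p, hpmem⟩).mp hlt
      exact absurd hd (not_lt.mpr (hlow y hy))
  · intro xbar hxbar
    rw [hX] at hxbar
    obtain ⟨h1, h2⟩ := hxbar
    have key := exp_sq_lower (x 0 - x 1) hx
    rw [EuclideanSpace.norm_eq, Fin.sum_univ_three]
    apply Real.sqrt_le_sqrt
    simp [hF, h1, h2, sq_abs]
    nlinarith [sq_nonneg (x 2)]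
end

section
/- Let L₃ > 0, μ̂ > 0, f̄ > 0, and let F_j, J_j, x_j, x̄_j be such that ‖F_j‖ ≤ 2f̄, ‖J_j(x̄_j - x_j) + F_j - F̄_j‖ ≤ L₃‖x_j - x̄_j‖², ‖F̄_j‖ = f̄, and μ_j ≤ μ̂. If s_j minimizes m_j(s) = ½‖F_j + J_j s‖² + ½ μ_j ‖F_j‖² ‖s‖², then ‖J_j s_j + F_j‖ ≤ f̄ + (2 μ̂ f̄ + L₃) ‖x_j - x̄_j‖². -/
private lemma lm_aux (L3 muhat fbar muj A B F t : ℝ)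
    (hL3 : 0 < L3) (hmuhat : 0 < muhat) (hfbar : 0 < fbar)
    (hmujle : muj ≤ muhat) (hA : 0 ≤ A) (hB : 0 ≤ B) (hF : 0 ≤ F) (ht : 0 ≤ t)
    (hFle : F ≤ 2 * fbar) (h1 : A ^ 2 ≤ B ^ 2 + muj * F ^ 2 * t)
    (h2 : B ≤ fbar + L3 * t) : A ≤ fbar + (2 * muhat * fbar + L3) * t := by
  have hBsq : B ^ 2 ≤ (fbar + L3 * t) ^ 2 := pow_le_pow_left₀ hB h2 2
  have h5 : F ^ 2 ≤ (2 * fbar) ^ 2 := pow_le_pow_left₀ hF hFle 2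
  have hmu2 : muj * F ^ 2 * t ≤ muhat * (2 * fbar) ^ 2 * t :=
    mul_le_mul_of_nonneg_right (mul_le_mul hmujle h5 (sq_nonneg _) hmuhat.le) ht
  have hR : (0:ℝ) ≤ fbar + (2 * muhat * fbar + L3) * t := by positivity
  have h4 : (fbar + L3 * t) ^ 2 + muhat * (2 * fbar) ^ 2 * t
      ≤ (fbar + (2 * muhat * fbar + L3) * t) ^ 2 := by
    nlinarith [mul_nonneg (mul_nonneg (mul_nonneg hmuhat.le hfbar.le) hL3.le) (sq_nonneg t),
      mul_nonneg (mul_nonneg (sq_nonneg muhat) (sq_nonneg fbar)) (sq_nonneg t)]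
  exact (pow_le_pow_iff_left₀ hA hR two_ne_zero).mp (by linarith)

/-- Lemma 4.1 (nonzero residual case): the residual of the minimizing LM model step
satisfies `‖J s + F‖ ≤ f̄ + (2μ̂f̄ + L₃)‖x - x̄‖²`. -/
theorem lm_model_residual_bound {mm nn : ℕ} (L3 muhat fbar muj : ℝ)
    (hL3 : 0 < L3) (hmuhat : 0 < muhat) (hfbar : 0 < fbar)
    (hmuj : 0 < muj) (hmujle : muj ≤ muhat)
    (Fj Fbarj : EuclideanSpace ℝ (Fin mm))
    (Jj : EuclideanSpace ℝ (Fin nn) →L[ℝ] EuclideanSpace ℝ (Fin mm))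
    (xj xbarj sj : EuclideanSpace ℝ (Fin nn))
    (hFnorm : ‖Fj‖ ≤ 2 * fbar)
    (hTaylor : ‖Jj (xbarj - xj) + Fj - Fbarj‖ ≤ L3 * ‖xj - xbarj‖ ^ 2)
    (hFbar : ‖Fbarj‖ = fbar)
    (mdl : EuclideanSpace ℝ (Fin nn) → ℝ)
    (hmdl : ∀ s, mdl s = 1 / 2 * ‖Fj + Jj s‖ ^ 2 + 1 / 2 * muj * ‖Fj‖ ^ 2 * ‖s‖ ^ 2)
    (hmin : ∀ s, mdl sj ≤ mdl s) :
    ‖Jj sj + Fj‖ ≤ fbar + (2 * muhat * fbar + L3) * ‖xj - xbarj‖ ^ 2 := by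
  have hh := hmin (xbarj - xj)
  rw [hmdl, hmdl] at hh
  have hrev : ‖xbarj - xj‖ = ‖xj - xbarj‖ := norm_sub_rev _ _
  rw [hrev] at hh
  have h1 : ‖Jj sj + Fj‖ ^ 2 ≤ ‖Fj + Jj (xbarj - xj)‖ ^ 2 + muj * ‖Fj‖ ^ 2 * ‖xj - xbarj‖ ^ 2 := by
    rw [show Jj sj + Fj = Fj + Jj sj from add_comm _ _]
    have := mul_nonneg (mul_nonneg hmuj.le (sq_nonneg ‖Fj‖)) (sq_nonneg ‖sj‖)
    nlinarith
  have heq : Fj + Jj (xbarj - xj) = (Jj (xbarj - xj) + Fj - Fbarj) + Fbarj := by abel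
  have h2 : ‖Fj + Jj (xbarj - xj)‖ ≤ fbar + L3 * ‖xj - xbarj‖ ^ 2 := by
    rw [heq]
    calc ‖(Jj (xbarj - xj) + Fj - Fbarj) + Fbarj‖
        ≤ ‖Jj (xbarj - xj) + Fj - Fbarj‖ + ‖Fbarj‖ := norm_add_le _ _
      _ ≤ fbar + L3 * ‖xj - xbarj‖ ^ 2 := by rw [hFbar]; linarith
  exact lm_aux L3 muhat fbar muj _ _ _ _ hL3 hmuhat hfbar hmujle
    (norm_nonneg _) (norm_nonneg _) (norm_nonneg _) (sq_nonneg _) hFnorm h1 h2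
end

section
/- Let C₃ > 0, Ĉ₃ > 0, c > 0, δ > 0 with C₃² δ² < 1, and suppose f̄ satisfies 0 < f̄ < min{1/c, (1 - C₃²δ²)/(Ĉ₃² + c)}. Let d, d' ≥ 0 with d ≤ δ satisfy (1 - c f̄) d'² ≤ C₃² d⁴ + Ĉ₃² f̄ d². Then d' ≤ C₄ d with C₄ = √((C₃² δ² + Ĉ₃² f̄)/(1 - c f̄)) and C₄ ∈ (0, 1). -/
/-- Linear local convergence recursion for small nonzero residuals (Lemma 4.6). -/
theorem lm_linear_rate (C3 C3hat c delta fbar d d' : ℝ)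
    (hC3 : 0 < C3) (hC3hat : 0 < C3hat) (hc : 0 < c) (hdelta : 0 < delta)
    (hsmall : C3 ^ 2 * delta ^ 2 < 1)
    (hfbar : 0 < fbar)
    (hfbarlt : fbar < min (1 / c) ((1 - C3 ^ 2 * delta ^ 2) / (C3hat ^ 2 + c)))
    (hd : 0 ≤ d) (hd' : 0 ≤ d') (hdle : d ≤ delta)
    (hrec : (1 - c * fbar) * d' ^ 2 ≤ C3 ^ 2 * d ^ 4 + C3hat ^ 2 * fbar * d ^ 2) :
    d' ≤ Real.sqrt ((C3 ^ 2 * delta ^ 2 + C3hat ^ 2 * fbar) / (1 - c * fbar)) * d ∧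
      Real.sqrt ((C3 ^ 2 * delta ^ 2 + C3hat ^ 2 * fbar) / (1 - c * fbar))
        ∈ Set.Ioo (0 : ℝ) 1 := by
  have h1 := (lt_min_iff.mp hfbarlt).1
  have h2 := (lt_min_iff.mp hfbarlt).2
  have hden : 0 < 1 - c * fbar := by
    have : c * fbar < c * (1 / c) := by nlinarith
    have : c * fbar < 1 := by
      field_simp at this; nlinarith
    linarith
  have hnum : 0 < C3 ^ 2 * delta ^ 2 + C3hat ^ 2 * fbar := by positivity
  set r : ℝ := (C3 ^ 2 * delta ^ 2 + C3hat ^ 2 * fbar) / (1 - c * fbar) with hr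
  have hrpos : 0 < r := div_pos hnum hden
  have hrlt : r < 1 := by
    rw [hr, div_lt_one hden]
    have hpos : 0 < C3hat ^ 2 + c := by positivity
    have h3 : fbar * (C3hat ^ 2 + c) < 1 - C3 ^ 2 * delta ^ 2 :=
      (lt_div_iff₀ hpos).mp h2
    nlinarith
  have hsq : d' ^ 2 ≤ r * d ^ 2 := by
    rw [hr, div_mul_eq_mul_div, le_div_iff₀ hden]
    have : C3 ^ 2 * d ^ 4 ≤ C3 ^ 2 * delta ^ 2 * d ^ 2 := by nlinarith [mul_self_le_mul_self hd hdle, sq_nonneg d, sq_nonneg C3, sq_nonneg (C3 * d)]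
    nlinarith
  have hsqrt : Real.sqrt r * d = Real.sqrt (r * d ^ 2) := by
    rw [Real.sqrt_mul hrpos.le, Real.sqrt_sq hd]
  constructor
  · rw [hsqrt]
    calc d' = Real.sqrt (d' ^ 2) := (Real.sqrt_sq hd').symm
    _ ≤ Real.sqrt (r * d ^ 2) := Real.sqrt_le_sqrt hsq
  · exact ⟨Real.sqrt_pos.mpr hrpos, by
      rw [show (1:ℝ) = Real.sqrt 1 by simp]
      exact Real.sqrt_lt_sqrt hrpos.le hrlt⟩
end
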